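/- For any r ≥ 2 and any tuples x̃_1 ∈ ℕ^{m_1}, …, x̃_r ∈ ℕ^{m_r} of positive integers, the Gauss measure of cylinders satisfies (log 2)^{r−1} ≤ μ(I(x̃_1 ⌢ ⋯ ⌢ x̃_r)) / (μ(I(x̃_1)) ⋯ μ(I(x̃_r))) ≤ (2·log 2)^{r−1}, where x̃_1 ⌢ ⋯ ⌢ x̃_r denotes the concatenation of the tuples. -/

import Mathlib

open MeasureTheory Filter

noncomputable def gaussMap (x : ℝ) : ℝ := Int.fract (1 / x)

noncomputable def cfDigit (n : ℕ) (ω : ℝ) : ℕ := ⌊1 / (gaussMap^[n] ω)⌋₊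

noncomputable def gaussMeasure : Measure ℝ :=
  (volume.restrict (Set.Ioo (0 : ℝ) 1)).withDensity
    (fun t => ENNReal.ofReal (1 / (Real.log 2 * (1 + t))))

def cylinder (n : ℕ) (a : Fin n → ℕ) : Set ℝ :=
  {ω | ω ∈ Set.Ioo (0 : ℝ) 1 ∧ Irrational ω ∧ ∀ i : Fin n, cfDigit i ω = a i}

def cylinderL (l : List ℕ) : Set ℝ :=
  {ω | ω ∈ Set.Ioo (0 : ℝ) 1 ∧ Irrational ω ∧
    ∀ i : Fin l.length, cfDigit i ω = l.get i}

namespace GaussAux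

lemma log2_pos : (0:ℝ) < Real.log 2 := Real.log_pos (by norm_num)

/-! ### Measurability -/

lemma measurable_gaussMap : Measurable gaussMap := by
  have : Measurable fun x : ℝ => 1 / x := by
    simpa [one_div] using (measurable_inv : Measurable fun x : ℝ => x⁻¹)
  exact this.fract

lemma measurable_cfDigit (n : ℕ) : Measurable (cfDigit n) := by
  have : Measurable (gaussMap^[n]) := measurable_gaussMap.iterate n
  have h1 : Measurable fun ω => 1 / (gaussMap^[n] ω) := by
    exact measurable_const.div this
  exact h1.nat_floor

lemma measurableSet_irrational : MeasurableSet {ω : ℝ | Irrational ω} := by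
  have : {ω : ℝ | Irrational ω} = (Set.range ((↑) : ℚ → ℝ))ᶜ := rfl
  rw [this]
  exact (Set.countable_range _).measurableSet.compl

lemma measurableSet_cylinderL (l : List ℕ) : MeasurableSet (cylinderL l) := by
  have : cylinderL l = (Set.Ioo (0:ℝ) 1) ∩ ({ω : ℝ | Irrational ω} ∩
      ⋂ i : Fin l.length, (cfDigit i) ⁻¹' {l.get i}) := by
    ext ω; simp [cylinderL, Set.mem_iInter, and_assoc]
  rw [this]
  exact measurableSet_Ioo.inter (measurableSet_irrational.inter
    (MeasurableSet.iInter fun i => (measurable_cfDigit i) (measurableSet_singleton _)))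

lemma cylinderL_subset (l : List ℕ) : cylinderL l ⊆ Set.Ioo (0:ℝ) 1 := fun _ h => h.1

lemma cylinderL_nil : cylinderL [] = Set.Ioo (0:ℝ) 1 ∩ {ω | Irrational ω} := by
  ext ω
  simp [cylinderL, and_assoc]

/-! ### Cylinder recursion -/

lemma cfDigit_succ (n : ℕ) (x : ℝ) : cfDigit (n+1) x = cfDigit n (gaussMap x) := by
  simp [cfDigit, Function.iterate_succ_apply]

lemma cylinderL_cons (a : ℕ) (ha : 1 ≤ a) (y : List ℕ) :
    cylinderL (a :: y) = (fun t : ℝ => 1 / (a + t)) '' cylinderL y := by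
  ext ω
  constructor
  · rintro ⟨⟨h0, h1⟩, hirr, hdig⟩
    have hω0 : ω ≠ 0 := ne_of_gt h0
    have hd0 : cfDigit 0 ω = a := hdig ⟨0, Nat.succ_pos _⟩
    have h1ω : (1:ℝ) < 1 / ω := by
      rw [lt_div_iff₀ h0]; linarith
    have hfl : (⌊(1:ℝ)/ω⌋₊ : ℝ) = a := by
      rw [show ⌊(1:ℝ)/ω⌋₊ = cfDigit 0 ω from by simp [cfDigit], hd0]
    refine ⟨gaussMap ω, ⟨⟨?_, ?_⟩, ?_, ?_⟩, ?_⟩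
    · have : Irrational (1/ω) := by
        simpa [one_div] using hirr.inv
      have hne : Int.fract (1/ω) ≠ 0 := by
        intro h
        rcases Int.fract_eq_iff.mp h with ⟨_, _, z, hz⟩
        exact this ⟨(z:ℚ), by push_cast; simpa using hz.symm⟩
      exact lt_of_le_of_ne (Int.fract_nonneg _) (Ne.symm (by simpa [gaussMap] using hne))
    · exact lt_of_lt_of_le (Int.fract_lt_one _) le_rfl
    · have : Irrational (1/ω) := by simpa [one_div] using hirr.inv
      have h2 := this.sub_intCast ⌊(1:ℝ)/ω⌋
      show Irrational (Int.fract (1/ω))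
      rw [Int.fract]
      exact h2
    · intro i
      have h3 := hdig i.succ
      rw [show ((i.succ : Fin (a::y).length) : ℕ) = (i:ℕ)+1 from rfl, cfDigit_succ] at h3
      exact h3
    · have hfr : gaussMap ω = 1/ω - a := by
        have hz : ((⌊(1:ℝ)/ω⌋₊ : ℤ)) = ⌊(1:ℝ)/ω⌋ := by
          rw [← Int.floor_toNat]
          exact Int.toNat_of_nonneg (Int.floor_nonneg.mpr (by positivity))
        have : (⌊(1:ℝ)/ω⌋ : ℝ) = a := by
          rw [← hz]; push_cast; exact hfl
        show Int.fract (1/ω) = 1/ω - a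
        rw [Int.fract, this]
      rw [hfr]
      show 1 / ((a:ℝ) + (1/ω - a)) = ω
      have hsum : (a:ℝ) + (1/ω - a) = 1/ω := by ring
      rw [hsum, one_div_one_div]
  · rintro ⟨ω', ⟨⟨h0, h1⟩, hirr, hdig⟩, rfl⟩
    have hden : (0:ℝ) < a + ω' := by positivity
    have hden1 : (1:ℝ) < a + ω' := by
      have : (1:ℝ) ≤ a := by exact_mod_cast ha
      linarith
    have hmem : 1 / (a + ω') ∈ Set.Ioo (0:ℝ) 1 := by
      constructor
      · positivity
      · rw [div_lt_one hden]; linarith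
    have hinv : 1 / (1 / (a + ω')) = a + ω' := by
      field_simp
    have hirr2 : Irrational (1 / ((a:ℝ) + ω')) := by
      have : Irrational ((a:ℝ) + ω') := by
        simpa [add_comm] using hirr.natCast_add a
      simpa [one_div] using this.inv
    have hg : gaussMap (1 / (a + ω')) = ω' := by
      simp only [gaussMap, hinv]
      rw [add_comm]
      rw [Int.fract_add_natCast]
      exact Int.fract_eq_self.mpr ⟨le_of_lt h0, h1⟩
    refine ⟨hmem, hirr2, ?_⟩
    intro i
    rcases i with ⟨i, hi⟩
    match i with
    | 0 =>
      show cfDigit 0 _ = a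
      simp only [cfDigit, Function.iterate_zero, id, hinv]
      rw [add_comm]
      rw [Nat.floor_add_natCast (le_of_lt h0)]
      rw [Nat.floor_eq_zero.mpr h1]
      simp
    | Nat.succ j =>
      show cfDigit (j+1) _ = y.get ⟨j, Nat.lt_of_succ_lt_succ hi⟩
      rw [cfDigit_succ, hg]
      exact hdig ⟨j, Nat.lt_of_succ_lt_succ hi⟩

/-! ### Möbius maps and their invariants -/

noncomputable def Phi (p p' q q' : ℕ) (t : ℝ) : ℝ := (p + p' * t) / (q + q' * t)

structure GInv (p p' q q' : ℕ) : Prop where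
  hq'1 : 1 ≤ q'
  hq'q : q' ≤ q
  hpq : p ≤ q
  hp'q' : p' ≤ q'
  hp'p : p' ≤ p
  hp1 : 1 ≤ p
  hsum : p + p' < q + q'
  det : (p : ℤ) * q' - p' * q = 1 ∨ (p : ℤ) * q' - p' * q = -1

lemma GInv.hq1 {p p' q q' : ℕ} (h : GInv p p' q q') : 1 ≤ q := le_trans h.hq'1 h.hq'q

lemma Qpos {p p' q q' : ℕ} (h : GInv p p' q q') {t : ℝ} (ht : 0 ≤ t) :
    0 < (q : ℝ) + q' * t := by
  have h1 : (1:ℝ) ≤ q := by exact_mod_cast h.hq1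
  have : (0:ℝ) ≤ q' * t := by positivity
  linarith

lemma Rpos {p p' q q' : ℕ} (h : GInv p p' q q') {t : ℝ} (ht : 0 ≤ t) :
    0 < ((q : ℝ) + p) + ((q':ℝ) + p') * t := by
  have h1 : (1:ℝ) ≤ q := by exact_mod_cast h.hq1
  have hp : (0:ℝ) ≤ p := Nat.cast_nonneg p
  have : (0:ℝ) ≤ ((q':ℝ) + p') * t := by positivity
  linarith

lemma detR {p p' q q' : ℕ} (h : GInv p p' q q') :
    ((p':ℝ) * q - p * q') = 1 ∨ ((p':ℝ) * q - p * q') = -1 := by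
  rcases h.det with hd | hd
  · right
    have : ((p:ℝ) * q' - p' * q) = 1 := by exact_mod_cast hd
    linarith
  · left
    have : ((p:ℝ) * q' - p' * q) = -1 := by exact_mod_cast hd
    linarith

lemma rep (l : List ℕ) (hne : l ≠ []) (hpos : ∀ b ∈ l, 1 ≤ b) :
    ∃ p p' q q', GInv p p' q q' ∧
      ∀ y : List ℕ, cylinderL (l ++ y) = Phi p p' q q' '' cylinderL y := by
  induction l with
  | nil => exact absurd rfl hne
  | cons a l' ih =>
    have ha : 1 ≤ a := hpos a List.mem_cons_self
    rcases eq_or_ne l' [] with rfl | hl'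
    · refine ⟨1, 0, a, 1, ⟨le_rfl, ha, ha, Nat.zero_le _, Nat.zero_le _, le_rfl,
        by omega, Or.inl (by push_cast; ring)⟩, ?_⟩
      intro y
      rw [show ([a] ++ y) = a :: y from rfl, cylinderL_cons a ha]
      apply Set.image_congr
      intro t _
      simp [Phi]
    · obtain ⟨p, p', q, q', hInv, hrep⟩ := ih hl' (fun b hb => hpos b (List.mem_cons_of_mem a hb))
      have haq : q ≤ a*q := Nat.le_mul_of_pos_left q ha
      have haq' : q' ≤ a*q' := Nat.le_mul_of_pos_left q' ha
      have hp1 := hInv.hp1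
      have hq1 := hInv.hq1
      refine ⟨q, q', a*q+p, a*q'+p', ?_, ?_⟩
      · refine ⟨?_, ?_, ?_, ?_, ?_, ?_, ?_, ?_⟩
        · have := hInv.hq'1; omega
        · exact Nat.add_le_add (Nat.mul_le_mul_left a hInv.hq'q) hInv.hp'p
        · omega
        · omega
        · exact hInv.hq'q
        · exact hq1
        · have := hInv.hq'1; omega
        · rcases hInv.det with h | h
          · right; push_cast at h ⊢; nlinarith [h]
          · left; push_cast at h ⊢; nlinarith [h]
      · intro y
        rw [show ((a :: l') ++ y) = a :: (l' ++ y) from rfl, cylinderL_cons a ha, hrep y,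
          ← Set.image_comp]
        apply Set.image_congr
        intro t ht
        obtain ⟨ht0, ht1⟩ := cylinderL_subset y ht
        have hQ : (0:ℝ) < q + q' * t := Qpos hInv (le_of_lt ht0)
        have h1aq : 1 ≤ a*q+p := by omega
        have hnum : (0:ℝ) < ((a*q+p : ℕ) : ℝ) + ((a*q'+p' : ℕ) : ℝ) * t := by
          have h1 : (1:ℝ) ≤ ((a*q+p : ℕ) : ℝ) := by exact_mod_cast h1aq
          have h2 : (0:ℝ) ≤ ((a*q'+p' : ℕ) : ℝ) * t := by positivity
          linarith
        have hPhiNonneg : 0 ≤ Phi p p' q q' t := by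
          unfold Phi
          apply div_nonneg _ (le_of_lt hQ)
          positivity
        have hden : (0:ℝ) < a + Phi p p' q q' t := by
          have : (1:ℝ) ≤ a := by exact_mod_cast ha
          linarith
        show 1 / ((a:ℝ) + Phi p p' q q' t) = Phi q q' (a*q+p) (a*q'+p') t
        unfold Phi at *
        rw [eq_div_iff (ne_of_gt hnum), one_div, inv_mul_eq_div, div_eq_iff (ne_of_gt hden)]
        push_cast
        field_simp
        ring

/-! ### Measure computations -/

lemma gauss_toReal (A : Set ℝ) (hA : MeasurableSet A) (hsub : A ⊆ Set.Ioo 0 1) :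
    (gaussMeasure A).toReal = ∫ t in A, 1 / (Real.log 2 * (1 + t)) := by
  have h1 : gaussMeasure A = ∫⁻ t in A, ENNReal.ofReal (1 / (Real.log 2 * (1 + t))) ∂volume := by
    rw [gaussMeasure, withDensity_apply _ hA, Measure.restrict_restrict hA,
      Set.inter_eq_self_of_subset_left hsub]
  rw [h1]
  rw [integral_eq_lintegral_of_nonneg_ae]
  · apply ae_restrict_of_forall_mem hA
    intro x hx
    have := (hsub hx).1
    have : (0:ℝ) < 1 + x := by linarith
    positivity
  · apply Measurable.aestronglyMeasurable
    apply Measurable.div measurable_const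
    exact (measurable_const.add measurable_id).const_mul (Real.log 2)

lemma Phi_injOn {p p' q q' : ℕ} (h : GInv p p' q q') :
    Set.InjOn (Phi p p' q q') (Set.Ioo 0 1) := by
  intro s hs t ht hst
  have hQs := Qpos h (le_of_lt hs.1)
  have hQt := Qpos h (le_of_lt ht.1)
  have hd := detR h
  unfold Phi at hst
  rw [div_eq_div_iff (ne_of_gt hQs) (ne_of_gt hQt)] at hst
  have key : ((p':ℝ) * q - p * q') * (s - t) = 0 := by nlinarith [hst]
  rcases hd with hd | hd <;> rw [hd] at key <;> linarith [key]

lemma Phi_hasDeriv {p p' q q' : ℕ} (h : GInv p p' q q') {t : ℝ} (ht : 0 ≤ t) :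
    HasDerivAt (Phi p p' q q')
      ((((p':ℝ)) * ((q:ℝ) + q' * t) - ((p:ℝ) + p' * t) * q') / ((q:ℝ) + q' * t)^2) t := by
  have hQ := Qpos h ht
  have h1 : HasDerivAt (fun s : ℝ => (p:ℝ) + p' * s) (p':ℝ) t := by
    have := ((hasDerivAt_id' t).const_mul (p':ℝ)).const_add (p:ℝ); rwa [mul_one] at this
  have h2 : HasDerivAt (fun s : ℝ => (q:ℝ) + q' * s) (q':ℝ) t := by
    have := ((hasDerivAt_id' t).const_mul (q':ℝ)).const_add (q:ℝ); rwa [mul_one] at this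
  exact h1.div h2 (ne_of_gt hQ)

lemma integral_image {p p' q q' : ℕ} (h : GInv p p' q q') (S : Set ℝ)
    (hS : MeasurableSet S) (hsub : S ⊆ Set.Ioo 0 1) :
    ∫ t in Phi p p' q q' '' S, 1 / (Real.log 2 * (1 + t)) =
      ∫ t in S, 1 / (Real.log 2 * (((q:ℝ) + q' * t) * (((q:ℝ) + p) + ((q':ℝ) + p') * t))) := by
  rw [integral_image_eq_integral_abs_deriv_smul hS
    (fun x hx => ((Phi_hasDeriv h (le_of_lt (hsub hx).1)).hasDerivWithinAt))
    ((Phi_injOn h).mono hsub)]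
  apply setIntegral_congr_fun hS
  intro x hx
  obtain ⟨hx0, hx1⟩ := hsub hx
  have hQ := Qpos h (le_of_lt hx0)
  have hR := Rpos h (le_of_lt hx0)
  dsimp only
  have hnum : ((p':ℝ)) * ((q:ℝ) + q' * x) - ((p:ℝ) + p' * x) * q' = (p':ℝ) * q - p * q' := by
    ring
  rw [smul_eq_mul, hnum]
  have habs : |((p':ℝ) * q - p * q') / ((q:ℝ) + q' * x)^2| = 1 / ((q:ℝ) + q' * x)^2 := by
    rcases detR h with hd | hd <;> rw [hd] <;>
      rw [abs_div, abs_of_pos (by positivity : (0:ℝ) < ((q:ℝ) + q' * x)^2)] <;> norm_num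
  rw [habs]
  have hPhi1 : 1 + Phi p p' q q' x =
      (((q:ℝ) + p) + ((q':ℝ) + p') * x) / ((q:ℝ) + q' * x) := by
    unfold Phi
    rw [eq_div_iff (ne_of_gt hQ), add_mul, div_mul_cancel₀ _ (ne_of_gt hQ)]
    ring
  rw [hPhi1]
  have hlog := log2_pos
  field_simp


/-! ### The measure of a cylinder -/

noncomputable def M (l : List ℕ) : ℝ := (gaussMeasure (cylinderL l)).toReal

lemma contOn_f : ContinuousOn (fun t : ℝ => 1 / (Real.log 2 * (1 + t))) (Set.Icc 0 1) := by
  apply ContinuousOn.div continuousOn_const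
  · fun_prop
  · intro x hx
    have := hx.1
    have hlog := log2_pos
    have : (0:ℝ) < 1 + x := by linarith
    positivity

lemma contOn_h {p p' q q' : ℕ} (h : GInv p p' q q') :
    ContinuousOn (fun t : ℝ =>
      1 / (Real.log 2 * (((q:ℝ) + q' * t) * (((q:ℝ) + p) + ((q':ℝ) + p') * t)))) (Set.Icc 0 1) := by
  apply ContinuousOn.div continuousOn_const
  · fun_prop
  · intro x hx
    have hQ := Qpos h hx.1
    have hR := Rpos h hx.1
    have hlog := log2_pos
    positivity

lemma integrableOn_f (S : Set ℝ) (hsub : S ⊆ Set.Ioo 0 1) (hS : MeasurableSet S) :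
    IntegrableOn (fun t : ℝ => 1 / (Real.log 2 * (1 + t))) S := by
  apply (contOn_f.integrableOn_Icc).mono_set
  exact le_trans hsub Set.Ioo_subset_Icc_self

lemma integrableOn_h {p p' q q' : ℕ} (h : GInv p p' q q') (S : Set ℝ)
    (hsub : S ⊆ Set.Ioo 0 1) (hS : MeasurableSet S) :
    IntegrableOn (fun t : ℝ =>
      1 / (Real.log 2 * (((q:ℝ) + q' * t) * (((q:ℝ) + p) + ((q':ℝ) + p') * t)))) S := by
  apply ((contOn_h h).integrableOn_Icc).mono_set
  exact le_trans hsub Set.Ioo_subset_Icc_self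

lemma M_append {p p' q q' : ℕ} (h : GInv p p' q q')
    (l : List ℕ) (hrep : ∀ y : List ℕ, cylinderL (l ++ y) = Phi p p' q q' '' cylinderL y)
    (y : List ℕ) :
    M (l ++ y) = ∫ t in (cylinderL y),
      1 / (Real.log 2 * (((q:ℝ) + q' * t) * (((q:ℝ) + p) + ((q':ℝ) + p') * t))) := by
  rw [M, gauss_toReal _ (measurableSet_cylinderL _) (cylinderL_subset _), hrep y,
    integral_image h _ (measurableSet_cylinderL y) (cylinderL_subset y)]

lemma cylinderL_nil_ae : cylinderL [] =ᵐ[volume] Set.Ioo (0:ℝ) 1 := by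
  rw [cylinderL_nil]
  have h1 : volume ((Set.Ioo (0:ℝ) 1 ∩ {ω | Irrational ω}) \ Set.Ioo 0 1) = 0 := by
    rw [Set.diff_eq_empty.mpr Set.inter_subset_left]
    exact measure_empty
  have h2 : volume (Set.Ioo (0:ℝ) 1 \ (Set.Ioo (0:ℝ) 1 ∩ {ω | Irrational ω})) = 0 := by
    apply measure_mono_null (t := Set.range ((↑) : ℚ → ℝ))
    · intro x hx
      obtain ⟨hx1, hx2⟩ := hx
      by_contra hc
      exact hx2 ⟨hx1, hc⟩
    · exact (Set.countable_range _).measure_zero _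
  rw [MeasureTheory.ae_eq_set]
  exact ⟨h1, h2⟩

/-- The explicit formula for the measure of a cylinder. -/
lemma M_formula (l : List ℕ) (hne : l ≠ []) (hpos : ∀ b ∈ l, 1 ≤ b)
    {p p' q q' : ℕ} (h : GInv p p' q q')
    (hrep : ∀ y : List ℕ, cylinderL (l ++ y) = Phi p p' q q' '' cylinderL y) :
    ∃ m : ℕ, 2 ≤ m ∧ M l * Real.log 2 = Real.log (m+1) - Real.log m ∧
      (((m:ℝ) = (q:ℝ) * ((q:ℝ)+p+q'+p') ∧ ((q:ℝ)+q') * ((q:ℝ)+p) = (m:ℝ)+1) ∨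
       ((m:ℝ) = ((q:ℝ)+q') * ((q:ℝ)+p) ∧ (q:ℝ) * ((q:ℝ)+p+q'+p') = (m:ℝ)+1)) := by
  -- value of M l as an explicit integral
  have hl : M l = ∫ t in Set.Ioo (0:ℝ) 1,
      1 / (Real.log 2 * (((q:ℝ) + q' * t) * (((q:ℝ) + p) + ((q':ℝ) + p') * t))) := by
    have := M_append h l hrep []
    rw [List.append_nil] at this
    rw [this, setIntegral_congr_set cylinderL_nil_ae]
  -- FTC
  set d : ℝ := (p:ℝ) * q' - p' * q with hd_def
  have hd : d = 1 ∨ d = -1 := by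
    rcases detR h with hd | hd
    · right; rw [hd_def]; linarith
    · left; rw [hd_def]; linarith
  set F : ℝ → ℝ := fun t => (-d / Real.log 2) *
    (Real.log (((q:ℝ) + p) + ((q':ℝ) + p') * t) - Real.log ((q:ℝ) + q' * t)) with hF_def
  have hFTC : ∫ t in Set.Ioo (0:ℝ) 1,
      1 / (Real.log 2 * (((q:ℝ) + q' * t) * (((q:ℝ) + p) + ((q':ℝ) + p') * t)))
      = F 1 - F 0 := by
    rw [← MeasureTheory.integral_Ioc_eq_integral_Ioo,
      ← intervalIntegral.integral_of_le (by norm_num : (0:ℝ) ≤ 1)]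
    apply intervalIntegral.integral_eq_sub_of_hasDerivAt
    · intro x hx
      rw [Set.uIcc_of_le (by norm_num : (0:ℝ) ≤ 1)] at hx
      have hQ := Qpos h hx.1
      have hR := Rpos h hx.1
      have hlog := log2_pos
      have hQd : HasDerivAt (fun s : ℝ => (q:ℝ) + q' * s) (q':ℝ) x := by
        have := ((hasDerivAt_id' x).const_mul (q':ℝ)).const_add (q:ℝ); rwa [mul_one] at this
      have hRd : HasDerivAt (fun s : ℝ => ((q:ℝ) + p) + ((q':ℝ) + p') * s) ((q':ℝ)+p') x := by
        have := ((hasDerivAt_id' x).const_mul ((q':ℝ)+p')).const_add ((q:ℝ)+p); rwa [mul_one] at this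
      have hlogR := hRd.log (ne_of_gt hR)
      have hlogQ := hQd.log (ne_of_gt hQ)
      have hder := ((hlogR.sub hlogQ).const_mul (-d / Real.log 2))
      refine hder.congr_deriv (Eq.symm ?_)
      have hkey : ((q':ℝ)+p') * ((q:ℝ) + q' * x)
          - (((q:ℝ) + p) + ((q':ℝ) + p') * x) * (q':ℝ) = -d := by
        rw [hd_def]; ring
      rw [div_sub_div _ _ (ne_of_gt hR) (ne_of_gt hQ), hkey]
      rcases hd with h1 | h1 <;>
      · rw [h1]
        rw [div_mul_div_comm]
        rw [eq_div_iff (by positivity), div_mul_eq_mul_div, div_eq_iff (by positivity)]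
        ring
    · apply ContinuousOn.intervalIntegrable
      rw [Set.uIcc_of_le (by norm_num : (0:ℝ) ≤ 1)]
      exact contOn_h h
  -- now compute F 1 - F 0
  have hq1 : (1:ℝ) ≤ q := by exact_mod_cast h.hq1
  have hp1 : (1:ℝ) ≤ p := by exact_mod_cast h.hp1
  have hq'1 : (1:ℝ) ≤ q' := by exact_mod_cast h.hq'1
  have hp'0 : (0:ℝ) ≤ p' := Nat.cast_nonneg p'
  have hlog := log2_pos
  have hF : M l * Real.log 2 =
      -d * (Real.log ((q:ℝ) * ((q:ℝ)+p+q'+p')) - Real.log (((q:ℝ)+q') * ((q:ℝ)+p))) := by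
    rw [hl, hFTC, hF_def]
    simp only
    rw [Real.log_mul (by positivity) (by positivity), Real.log_mul (by positivity) (by positivity)]
    field_simp
    ring
  have hm2 : 2 ≤ q+p+q'+p' := by
    have := h.hq1; have := h.hp1; omega
  rcases hd with h1 | h1 <;> rw [hd_def] at h1
  · -- d = 1 : E + 1 = D where E = q*B, D = (q+q')*A
    refine ⟨q * (q+p+q'+p'), ?_, ?_, ?_⟩
    · calc 2 = 1 * 2 := by norm_num
        _ ≤ q * (q+p+q'+p') := Nat.mul_le_mul h.hq1 hm2
    · rw [hF, hd_def, h1]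
      have hcast : ((q * (q+p+q'+p') : ℕ) : ℝ) = (q:ℝ) * ((q:ℝ)+p+q'+p') := by push_cast; ring
      have hDE : ((q:ℝ)+q') * ((q:ℝ)+p) = (q:ℝ) * ((q:ℝ)+p+q'+p') + 1 := by
        linear_combination h1
      rw [hcast, hDE]
      ring
    · left
      refine ⟨by push_cast; ring, ?_⟩
      push_cast
      linear_combination h1
  · -- d = -1 : D + 1 = E
    refine ⟨(q+q') * (q+p), ?_, ?_, ?_⟩
    · calc 2 = 1 * 2 := by norm_num
        _ ≤ (q+q') * (q+p) := Nat.mul_le_mul (by have := h.hq1; omega) (by have := h.hq1; have := h.hp1; omega)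
    · rw [hF, hd_def, h1]
      have hcast : (((q+q') * (q+p) : ℕ) : ℝ) = ((q:ℝ)+q') * ((q:ℝ)+p) := by push_cast; ring
      have hED : (q:ℝ) * ((q:ℝ)+p+q'+p') = ((q:ℝ)+q') * ((q:ℝ)+p) + 1 := by
        linear_combination -h1
      rw [hcast, hED]
      ring
    · right
      refine ⟨by push_cast; ring, ?_⟩
      push_cast
      linear_combination -h1


/-! ### Pointwise sandwich bounds -/

lemma log_ratio_bounds {m : ℕ} (hm2 : 2 ≤ m) :
    1/((m:ℝ)+1) ≤ Real.log ((m:ℝ)+1) - Real.log m ∧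
    Real.log ((m:ℝ)+1) - Real.log m ≤ 1/(m:ℝ) := by
  have hm0 : (0:ℝ) < m := by exact_mod_cast Nat.lt_of_lt_of_le Nat.zero_lt_two hm2
  have hm10 : (0:ℝ) < m + 1 := by linarith
  constructor
  · have h1 := Real.log_le_sub_one_of_pos (show (0:ℝ) < (m:ℝ)/((m:ℝ)+1) by positivity)
    rw [Real.log_div (ne_of_gt hm0) (ne_of_gt hm10)] at h1
    have h2 : (m:ℝ)/((m:ℝ)+1) - 1 = -(1/((m:ℝ)+1)) := by field_simp; ring
    linarith
  · have h1 := Real.log_le_sub_one_of_pos (show (0:ℝ) < ((m:ℝ)+1)/(m:ℝ) by positivity)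
    rw [Real.log_div (ne_of_gt hm10) (ne_of_gt hm0)] at h1
    have h2 : ((m:ℝ)+1)/(m:ℝ) - 1 = 1/(m:ℝ) := by field_simp; ring
    linarith

lemma sandwich_core (a b c f m L w t : ℝ)
    (h1a : 1 ≤ a) (h1b : 1 ≤ b) (h1c : 1 ≤ c) (h0f : 0 ≤ f)
    (hba : b ≤ a) (hca : c ≤ a) (hfb : f ≤ b) (hfc : f ≤ c)
    (hm0 : 0 < m) (hLge : 1/(m+1) ≤ L) (hLle : L ≤ 1/m)
    (hcase : (m = a*(a+c+b+f) ∧ (a+b)*(a+c) = m+1) ∨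
             (m = (a+b)*(a+c) ∧ a*(a+c+b+f) = m+1))
    (hw : 0 < w) (ht0 : 0 ≤ t) (ht1 : t ≤ 1) :
    L * (1 / (w * (1+t))) ≤ 1 / (w * ((a + b*t) * ((a+c) + (b+f)*t))) ∧
    1 / (w * ((a + b*t) * ((a+c) + (b+f)*t))) ≤ 2 * L * (1 / (w * (1+t))) := by
  have h1t : (0:ℝ) < 1 + t := by linarith
  have hb1 : (0:ℝ) ≤ (a - b) * t := mul_nonneg (by linarith) ht0
  have hb2 : (0:ℝ) ≤ (b + f) * (1 - t) := mul_nonneg (by linarith) (by linarith)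
  have hb3 : (0:ℝ) ≤ b * (1 - t) := mul_nonneg (by linarith) (by linarith)
  have hb4 : (0:ℝ) ≤ ((a+c) - (b+f)) * t := mul_nonneg (by linarith) ht0
  have hb5 : (0:ℝ) ≤ (a - b) * (1 - t) := mul_nonneg (by linarith) (by linarith)
  have hb6 : (0:ℝ) ≤ (b+f) * t := mul_nonneg (by linarith) ht0
  have hb7 : (0:ℝ) ≤ b * t := mul_nonneg (by linarith) ht0
  have hb8 : (0:ℝ) ≤ ((a+c) - (b+f)) * (1 - t) := mul_nonneg (by linarith) (by linarith)
  have hQ : (0:ℝ) < a + b*t := by linarith [hb7]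
  have hR : (0:ℝ) < (a+c) + (b+f)*t := by linarith [hb6]
  have e1 : (a + b*t) * ((a+c) + (b+f)*t) ≤ (a*(a+c+b+f)) * (1+t) := by
    have a1 : a + b*t ≤ a * (1+t) := by linarith [hb1]
    have a2 : (a+c) + (b+f)*t ≤ a+c+b+f := by linarith [hb2]
    calc (a + b*t) * ((a+c) + (b+f)*t)
        ≤ (a * (1+t)) * (a+c+b+f) :=
          mul_le_mul a1 a2 (le_of_lt hR) (by positivity)
      _ = (a*(a+c+b+f)) * (1+t) := by ring
  have e2 : (a + b*t) * ((a+c) + (b+f)*t) ≤ ((a+b)*(a+c)) * (1+t) := by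
    have a1 : a + b*t ≤ a + b := by linarith [hb3]
    have a2 : (a+c) + (b+f)*t ≤ (a+c) * (1+t) := by linarith [hb4]
    calc (a + b*t) * ((a+c) + (b+f)*t)
        ≤ (a + b) * ((a+c) * (1+t)) :=
          mul_le_mul a1 a2 (le_of_lt hR) (by positivity)
      _ = ((a+b)*(a+c)) * (1+t) := by ring
  have e3 : ((a+b)*(a+c)) * (1+t) ≤ 2 * ((a + b*t) * ((a+c) + (b+f)*t)) := by
    have a1 : (a+b) * (1+t) ≤ 2 * (a + b*t) := by linarith [hb5]
    have a2 : a+c ≤ (a+c) + (b+f)*t := by linarith [hb6]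
    calc ((a+b)*(a+c)) * (1+t) = ((a+b) * (1+t)) * (a+c) := by ring
      _ ≤ (2 * (a + b*t)) * ((a+c) + (b+f)*t) :=
          mul_le_mul a1 a2 (by positivity) (by positivity)
      _ = 2 * ((a + b*t) * ((a+c) + (b+f)*t)) := by ring
  have e4 : (a*(a+c+b+f)) * (1+t) ≤ 2 * ((a + b*t) * ((a+c) + (b+f)*t)) := by
    have a1 : a ≤ a + b*t := by linarith [hb7]
    have a2 : (a+c+b+f) * (1+t) ≤ 2 * ((a+c) + (b+f)*t) := by linarith [hb8]
    calc (a*(a+c+b+f)) * (1+t) = a * ((a+c+b+f) * (1+t)) := by ring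
      _ ≤ (a + b*t) * (2 * ((a+c) + (b+f)*t)) :=
          mul_le_mul a1 a2 (by positivity) (by positivity)
      _ = 2 * ((a + b*t) * ((a+c) + (b+f)*t)) := by ring
  have hQRle : (a + b*t) * ((a+c) + (b+f)*t) ≤ m * (1+t) := by
    rcases hcase with ⟨hm, _⟩ | ⟨hm, _⟩ <;> rw [hm] <;> [exact e1; exact e2]
  have hQRge : (m+1) * (1+t) ≤ 2 * ((a + b*t) * ((a+c) + (b+f)*t)) := by
    rcases hcase with ⟨_, hm⟩ | ⟨_, hm⟩ <;> rw [← hm] <;> [exact e3; exact e4]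
  constructor
  · rw [mul_one_div, div_le_div_iff₀ (by positivity) (by positivity)]
    have c1 : L * ((a + b*t) * ((a+c) + (b+f)*t)) ≤ (1/m) * (m * (1+t)) := by
      apply le_trans (mul_le_mul_of_nonneg_right hLle (by positivity))
      exact mul_le_mul_of_nonneg_left hQRle (by positivity)
    have c3 : (1/m) * (m * (1+t)) = 1+t := by field_simp
    have c4 : L * ((a + b*t) * ((a+c) + (b+f)*t)) ≤ 1 + t := le_trans c1 (le_of_eq c3)
    have c5 := mul_le_mul_of_nonneg_left c4 (le_of_lt hw)
    linarith [c5]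
  · rw [mul_one_div, div_le_div_iff₀ (by positivity) (by positivity)]
    have c1 : (1/(m+1)) * ((m+1) * (1+t)) ≤ L * (2 * ((a + b*t) * ((a+c) + (b+f)*t))) := by
      apply le_trans (mul_le_mul_of_nonneg_left hQRge (by positivity))
      exact mul_le_mul_of_nonneg_right hLge (by positivity)
    have c2 : (1/(m+1)) * ((m+1) * (1+t)) = 1+t := by field_simp
    have c4 : 1 + t ≤ L * (2 * ((a + b*t) * ((a+c) + (b+f)*t))) :=
      le_trans (le_of_eq c2.symm) c1
    have c5 := mul_le_mul_of_nonneg_left c4 (le_of_lt hw)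
    linarith [c5]

lemma sandwich {p p' q q' : ℕ} (h : GInv p p' q q') {m : ℕ} (hm2 : 2 ≤ m)
    (hcase : (((m:ℝ) = (q:ℝ) * ((q:ℝ)+p+q'+p') ∧ ((q:ℝ)+q') * ((q:ℝ)+p) = (m:ℝ)+1) ∨
       ((m:ℝ) = ((q:ℝ)+q') * ((q:ℝ)+p) ∧ (q:ℝ) * ((q:ℝ)+p+q'+p') = (m:ℝ)+1)))
    {t : ℝ} (ht0 : 0 ≤ t) (ht1 : t ≤ 1) :
    (Real.log ((m:ℝ)+1) - Real.log m) * (1 / (Real.log 2 * (1+t))) ≤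
      1 / (Real.log 2 * (((q:ℝ) + q' * t) * (((q:ℝ) + p) + ((q':ℝ) + p') * t))) ∧
    1 / (Real.log 2 * (((q:ℝ) + q' * t) * (((q:ℝ) + p) + ((q':ℝ) + p') * t))) ≤
      2 * (Real.log ((m:ℝ)+1) - Real.log m) * (1 / (Real.log 2 * (1+t))) := by
  obtain ⟨hLge, hLle⟩ := log_ratio_bounds hm2
  have hm0 : (0:ℝ) < m := by exact_mod_cast Nat.lt_of_lt_of_le Nat.zero_lt_two hm2
  have hc' : ((m:ℝ) = (q:ℝ)*((q:ℝ)+(p:ℝ)+(q':ℝ)+(p':ℝ)) ∧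
        ((q:ℝ)+(q':ℝ))*((q:ℝ)+(p:ℝ)) = (m:ℝ)+1) ∨
      ((m:ℝ) = ((q:ℝ)+(q':ℝ))*((q:ℝ)+(p:ℝ)) ∧
        (q:ℝ)*((q:ℝ)+(p:ℝ)+(q':ℝ)+(p':ℝ)) = (m:ℝ)+1) := by
    rcases hcase with ⟨h1, h2⟩ | ⟨h1, h2⟩
    · left; exact ⟨by linarith, by linarith⟩
    · right; exact ⟨by linarith, by linarith⟩
  exact sandwich_core (q:ℝ) (q':ℝ) (p:ℝ) (p':ℝ) (m:ℝ)
    (Real.log ((m:ℝ)+1) - Real.log m) (Real.log 2) t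
    (by exact_mod_cast h.hq1) (by exact_mod_cast h.hq'1) (by exact_mod_cast h.hp1)
    (Nat.cast_nonneg p') (by exact_mod_cast h.hq'q) (by exact_mod_cast h.hpq)
    (by exact_mod_cast h.hp'q') (by exact_mod_cast h.hp'p)
    hm0 hLge hLle hc' log2_pos ht0 ht1

/-! ### The key quasi-independence step -/

lemma M_nonneg (y : List ℕ) : 0 ≤ M y := ENNReal.toReal_nonneg

lemma step_ineq (l : List ℕ) (hne : l ≠ []) (hpos : ∀ b ∈ l, 1 ≤ b) (y : List ℕ) :
    Real.log 2 * M l * M y ≤ M (l ++ y) ∧ M (l ++ y) ≤ 2 * Real.log 2 * M l * M y := by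
  obtain ⟨p, p', q, q', h, hrep⟩ := rep l hne hpos
  obtain ⟨m, hm2, hMl, hcase⟩ := M_formula l hne hpos h hrep
  have hMA := M_append h l hrep y
  have hMy : M y = ∫ t in cylinderL y, 1 / (Real.log 2 * (1+t)) :=
    gauss_toReal _ (measurableSet_cylinderL y) (cylinderL_subset y)
  have hL : Real.log 2 * M l = Real.log ((m:ℝ)+1) - Real.log m := by
    rw [mul_comm]; exact_mod_cast hMl
  have hint_f := integrableOn_f (cylinderL y) (cylinderL_subset y) (measurableSet_cylinderL y)
  have hint_h := integrableOn_h h (cylinderL y) (cylinderL_subset y) (measurableSet_cylinderL y)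
  constructor
  · rw [hMA, hMy, ← integral_const_mul]
    apply setIntegral_mono_on (hint_f.const_mul _) hint_h (measurableSet_cylinderL y)
    intro t ht
    obtain ⟨ht0, ht1⟩ := cylinderL_subset y ht
    have hsw := (sandwich h hm2 hcase (le_of_lt ht0) (le_of_lt ht1)).1
    rw [← hL] at hsw
    exact hsw
  · rw [hMA, hMy, ← integral_const_mul]
    apply setIntegral_mono_on hint_h (hint_f.const_mul _) (measurableSet_cylinderL y)
    intro t ht
    obtain ⟨ht0, ht1⟩ := cylinderL_subset y ht
    have hsw := (sandwich h hm2 hcase (le_of_lt ht0) (le_of_lt ht1)).2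
    rw [← hL] at hsw
    calc (1 : ℝ) / (Real.log 2 * (((q:ℝ) + q' * t) * (((q:ℝ) + p) + ((q':ℝ) + p') * t)))
        ≤ 2 * (Real.log 2 * M l) * (1 / (Real.log 2 * (1+t))) := hsw
      _ = 2 * Real.log 2 * M l * (1 / (Real.log 2 * (1+t))) := by ring

lemma M_pos (l : List ℕ) (hne : l ≠ []) (hpos : ∀ b ∈ l, 1 ≤ b) : 0 < M l := by
  obtain ⟨p, p', q, q', h, hrep⟩ := rep l hne hpos
  obtain ⟨m, hm2, hMl, _⟩ := M_formula l hne hpos h hrep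
  have hm0 : (0:ℝ) < m := by exact_mod_cast Nat.lt_of_lt_of_le Nat.zero_lt_two hm2
  have hlt : Real.log (m:ℝ) < Real.log ((m:ℝ)+1) := Real.log_lt_log hm0 (by linarith)
  have hlog := log2_pos
  nlinarith [hMl, hlt]

/-! ### Induction over lists of blocks -/

lemma multi_ineq (L : List (List ℕ)) (hL : L ≠ [])
    (h : ∀ l ∈ L, l ≠ [] ∧ ∀ b ∈ l, 1 ≤ b) :
    (Real.log 2)^(L.length - 1) * (L.map M).prod ≤ M L.flatten ∧
    M L.flatten ≤ (2 * Real.log 2)^(L.length - 1) * (L.map M).prod := by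
  induction L with
  | nil => exact absurd rfl hL
  | cons l L' ih =>
    obtain ⟨hlne, hlpos⟩ := h l List.mem_cons_self
    rcases eq_or_ne L' [] with rfl | hL'
    · simp [M]
    · have hfl : L'.flatten ≠ [] := by
        rcases List.exists_mem_of_ne_nil L' hL' with ⟨l'', hl''⟩
        intro hc
        rw [List.flatten_eq_nil_iff] at hc
        exact (h l'' (List.mem_cons_of_mem l hl'')).1 (hc l'' hl'')
      have hflpos : ∀ b ∈ L'.flatten, 1 ≤ b := by
        intro b hb
        rw [List.mem_flatten] at hb
        obtain ⟨l'', hl'', hb'⟩ := hb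
        exact (h l'' (List.mem_cons_of_mem l hl'')).2 b hb'
      obtain ⟨ih1, ih2⟩ := ih hL' (fun l'' hl'' => h l'' (List.mem_cons_of_mem l hl''))
      obtain ⟨s1, s2⟩ := step_ineq l hlne hlpos L'.flatten
      have hlenpos : 0 < L'.length := List.length_pos_iff.mpr hL'
      have hlen : (l :: L').length - 1 = (L'.length - 1) + 1 := by
        simp only [List.length_cons]
        omega
      have hMl := M_pos l hlne hlpos
      have hMfl := M_nonneg L'.flatten
      have hprod : (0:ℝ) ≤ (L'.map M).prod := by
        apply List.prod_nonneg
        intro a ha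
        rw [List.mem_map] at ha
        obtain ⟨l'', _, rfl⟩ := ha
        exact M_nonneg l''
      have hlog := log2_pos
      constructor
      · show (Real.log 2)^((l :: L').length - 1) * ((l :: L').map M).prod ≤ M ((l :: L').flatten)
        rw [hlen, List.map_cons, List.prod_cons, show (l :: L').flatten = l ++ L'.flatten from rfl]
        calc (Real.log 2)^((L'.length - 1) + 1) * (M l * (L'.map M).prod)
            = Real.log 2 * M l * ((Real.log 2)^(L'.length - 1) * (L'.map M).prod) := by ring
          _ ≤ Real.log 2 * M l * M L'.flatten := by
              apply mul_le_mul_of_nonneg_left ih1 (by positivity)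
          _ ≤ M (l ++ L'.flatten) := s1
      · show M ((l :: L').flatten) ≤ (2 * Real.log 2)^((l :: L').length - 1) * ((l :: L').map M).prod
        rw [hlen, List.map_cons, List.prod_cons, show (l :: L').flatten = l ++ L'.flatten from rfl]
        calc M (l ++ L'.flatten) ≤ 2 * Real.log 2 * M l * M L'.flatten := s2
          _ ≤ 2 * Real.log 2 * M l * ((2 * Real.log 2)^(L'.length - 1) * (L'.map M).prod) := by
              apply mul_le_mul_of_nonneg_left ih2 (by positivity)
          _ = (2 * Real.log 2)^((L'.length - 1) + 1) * (M l * (L'.map M).prod) := by ring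

end GaussAux

theorem gauss_measure_quasi_independence_multi
    (r : ℕ) (hr : 2 ≤ r) (x : Fin r → List ℕ)
    (hne : ∀ i, x i ≠ []) (hpos : ∀ i, ∀ a ∈ x i, 1 ≤ a) :
    (Real.log 2) ^ (r - 1) ≤
      (gaussMeasure (cylinderL (List.ofFn x).flatten)).toReal /
        ∏ i, (gaussMeasure (cylinderL (x i))).toReal ∧
    (gaussMeasure (cylinderL (List.ofFn x).flatten)).toReal /
        ∏ i, (gaussMeasure (cylinderL (x i))).toReal
      ≤ (2 * Real.log 2) ^ (r - 1) := by
  have hLne : List.ofFn x ≠ [] := by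
    intro hc
    have : (List.ofFn x).length = 0 := by rw [hc]; rfl
    rw [List.length_ofFn] at this
    omega
  have hmem : ∀ l ∈ List.ofFn x, l ≠ [] ∧ ∀ b ∈ l, 1 ≤ b := by
    intro l hl
    rw [List.mem_ofFn] at hl
    obtain ⟨i, rfl⟩ := hl
    exact ⟨hne i, hpos i⟩
  obtain ⟨h1, h2⟩ := GaussAux.multi_ineq (List.ofFn x) hLne hmem
  have hlen : (List.ofFn x).length = r := List.length_ofFn
  have hprod : ((List.ofFn x).map GaussAux.M).prod = ∏ i, GaussAux.M (x i) := by
    rw [List.map_ofFn, List.prod_ofFn]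
    rfl
  have hprodpos : 0 < ∏ i, GaussAux.M (x i) :=
    Finset.prod_pos (fun i _ => GaussAux.M_pos (x i) (hne i) (hpos i))
  rw [hlen, hprod] at h1 h2
  have hMdef : ∀ l : List ℕ, GaussAux.M l = (gaussMeasure (cylinderL l)).toReal := fun _ => rfl
  simp only [← hMdef]
  constructor
  · rw [le_div_iff₀ hprodpos]
    exact h1
  · rw [div_le_iff₀ hprodpos]
    exact h2
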